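/- Let G be a finite group acting generically freely on a smooth G-variety X in divisorial form. Then for every component F of a fixed-point locus X^H (H ⊆ G a subgroup), the generic stabilizer group I(F) is contained in the center of the component stabilizer group D(F). -/
import Mathlib


/-!
STATEMENT 3: (Divisorial form implies central generic stabilizers.)
Abstract algebraic form: let `D` be the component stabilizer `D(F)` of a stratum `F`,
acting by automorphisms `ρ` on the function field `L = k(F)` fixing the algebraically
closed base field `k`, and let `H ⊴ D` be the (abelian) generic stabilizer `I(F)`,
acting trivially on `L`.  The divisoriality hypothesis says that every character
`χ : H → k^×` is the restriction of a 1-cocycle of `D` with values in `L^×`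
(surjectivity of `Pic(X,G) → H¹(D, k(F)^×) → H¹(H, k(F)^×)^Y → H^∨`).
Conclusion: `H` is contained in the center of `D`.
-/

namespace Stmt3

/-- 1-cocycle condition for `f : D → L^×` with respect to the action `ρ` of `D` on `L`. -/
def IsCocycle {L : Type} [Field L] {D : Type} [Group D] (ρ : D →* RingAut L)
    (f : D → Lˣ) : Prop :=
  ∀ g h : D, (f (g * h) : L) = (f g : L) * ρ g (f h : L)

theorem divisorial_implies_central
    (k L : Type) [Field k] [IsAlgClosed k] [CharZero k] [Field L] [Algebra k L]
    (D : Type) [Group D] [Finite D]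
    (ρ : D →* RingAut L)
    (hfix : ∀ (d : D) (a : k), ρ d (algebraMap k L a) = algebraMap k L a)
    (H : Subgroup D) [H.Normal]
    (habel : ∀ x y : H, x * y = y * x)
    (htriv : ∀ h ∈ H, ρ h = 1)
    (hsurj : ∀ χ : H →* kˣ, ∃ f : D → Lˣ, IsCocycle ρ f ∧
      ∀ h : H, (f (h : D) : L) = algebraMap k L (χ h : k)) :
    H ≤ Subgroup.center D := by
  intro h hh
  rw [Subgroup.mem_center_iff]
  intro d
  -- suffices to show d * h * d⁻¹ = h
  have key : d * h * d⁻¹ = h := by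
    -- the conjugate is in H
    have hconj : d * h * d⁻¹ ∈ H := Subgroup.Normal.conj_mem ‹H.Normal› h hh d
    -- characters separate points; show all χ agree on the two elements
    by_contra hne
    letI : CommGroup H := { mul_comm := habel }
    have hne' : (⟨d * h * d⁻¹, hconj⟩ : H) * (⟨h, hh⟩ : H)⁻¹ ≠ 1 := by
      intro heq
      apply hne
      have := mul_eq_one_iff_eq_inv.mp heq
      simpa using congrArg (fun x : H => (x : D)) this
    haveI : NeZero (Monoid.exponent H) := ⟨Monoid.exponent_ne_zero_of_finite⟩
    haveI : NeZero ((Monoid.exponent H : ℕ) : k) := ⟨by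
      exact_mod_cast Nat.cast_ne_zero.mpr Monoid.exponent_ne_zero_of_finite⟩
    obtain ⟨χ, hχ⟩ := CommGroup.exists_apply_ne_one_of_hasEnoughRootsOfUnity H k hne'
    obtain ⟨f, hcoc, hres⟩ := hsurj χ
    -- compute f(d*h) two ways
    have e1 : (f (d * h) : L) = (f d : L) * algebraMap k L (χ ⟨h, hh⟩ : k) := by
      rw [hcoc d h]
      have : (f h : L) = algebraMap k L (χ ⟨h, hh⟩ : k) := hres ⟨h, hh⟩
      rw [this, hfix]
    have e2 : (f (d * h) : L) = algebraMap k L (χ ⟨d * h * d⁻¹, hconj⟩ : k) * (f d : L) := by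
      have hrw : f (d * h) = f ((d * h * d⁻¹) * d) := by congr 1; group
      rw [hrw, hcoc (d * h * d⁻¹) d, hres ⟨d * h * d⁻¹, hconj⟩]
      congr 1
      have := htriv (d * h * d⁻¹) hconj
      rw [this]; rfl
    have hfd : (f d : L) ≠ 0 := (f d).ne_zero
    have e3 : (f d : L) * algebraMap k L (χ ⟨h, hh⟩ : k)
        = (f d : L) * algebraMap k L (χ ⟨d * h * d⁻¹, hconj⟩ : k) := by
      rw [← e1, e2, mul_comm]
    have : algebraMap k L (χ ⟨d * h * d⁻¹, hconj⟩ : k) = algebraMap k L (χ ⟨h, hh⟩ : k) :=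
      (mul_left_cancel₀ hfd e3).symm
    have hinj := (algebraMap k L).injective this
    apply hχ
    have : (χ ⟨d * h * d⁻¹, hconj⟩ : k) = (χ ⟨h, hh⟩ : k) := hinj
    have hu : χ ⟨d * h * d⁻¹, hconj⟩ = χ ⟨h, hh⟩ := Units.ext this
    rw [map_mul, map_inv, hu, mul_inv_cancel]
  -- conclude
  have := congrArg (· * d) key
  simpa [mul_assoc] using this


end Stmt3
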